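/- For every positive integer y, the sum over j ≥ 0 of K_{y+1,j} := f(y)f(y+1)/(f(y+j)f(y+j+1)) equals (y+4)(2y+5)/(10(y+2)), where f(x) = x(x+3)(2x+3). Consequently, for the chain X̃ started at y+1, the probability of never hitting y is 10(y+2)/((y+4)(2y+5)). -/

import Mathlib

open Filter Topology

noncomputable def p (x : ℕ) : ℝ :=
  ((x : ℝ) + 4) * (2 * x + 5) / (3 * ((x : ℝ) + 2) * (2 * x + 3))

noncomputable def r (x : ℕ) : ℝ :=
  (x : ℝ) * ((x : ℝ) + 3) / (3 * ((x : ℝ) + 1) * ((x : ℝ) + 2))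

noncomputable def q (x : ℕ) : ℝ :=
  ((x : ℝ) - 1) * (2 * x + 1) / (3 * ((x : ℝ) + 1) * (2 * x + 3))

noncomputable def f (x : ℝ) : ℝ := x * (x + 3) * (2 * x + 3)

/-- `H k n x` is the probability that the chain `X̃` started at `x` hits `k`
within `n` steps. -/
noncomputable def H (k : ℕ) : ℕ → ℕ → ℝ
  | 0, x => if x = k then 1 else 0
  | n + 1, x =>
    if x = k then 1 else p x * H k n (x + 1) + r x * H k n x + q x * H k n (x - 1)

namespace Stmt4Aux

/-- Telescoping helper: `1/(f z * f (z+1)) = A z - A (z+1)`. -/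
noncomputable def A (z : ℝ) : ℝ := 1 / (10 * z * (z + 1) * (z + 2) * (z + 3) * (2 * z + 3))

/-- The summand `K_{y+1,j}`. -/
noncomputable def Kt (y j : ℕ) : ℝ :=
  f y * f (y + 1) / (f ((y : ℝ) + j) * f ((y : ℝ) + j + 1))

/-- The value of the sum. -/
noncomputable def Sv (y : ℕ) : ℝ := ((y : ℝ) + 4) * (2 * y + 5) / (10 * ((y : ℝ) + 2))

lemma f_pos {x : ℝ} (hx : 0 < x) : 0 < f x := by
  have h3 : 0 < x + 3 := by linarith
  have h2 : 0 < 2 * x + 3 := by linarith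
  unfold f
  exact mul_pos (mul_pos hx h3) h2

lemma A_pos {z : ℝ} (hz : 0 < z) : 0 < A z := by
  unfold A; positivity

lemma telescope {z : ℝ} (hz : 1 ≤ z) : 1 / (f z * f (z + 1)) = A z - A (z + 1) := by
  have h0 : (0 : ℝ) < z := by linarith
  unfold f A
  have h1 : z + 1 ≠ 0 := by nlinarith
  have h2 : z + 2 ≠ 0 := by nlinarith
  have h3 : z + 3 ≠ 0 := by nlinarith
  have h4 : z + 4 ≠ 0 := by nlinarith
  have h5 : 2 * z + 3 ≠ 0 := by nlinarith
  have h6 : 2 * z + 5 ≠ 0 := by nlinarith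
  have h7 : (z : ℝ) ≠ 0 := ne_of_gt h0
  have h8 : 2 * (z + 1) + 3 = 2 * z + 5 := by ring
  field_simp
  ring

lemma Kt_eq (y : ℕ) (hy : 0 < y) (j : ℕ) :
    Kt y j = f y * f (y + 1) * (A ((y : ℝ) + j) - A ((y : ℝ) + j + 1)) := by
  have hz : (1 : ℝ) ≤ (y : ℝ) + j := by
    have : (1 : ℝ) ≤ (y : ℝ) := by exact_mod_cast hy
    have : (0 : ℝ) ≤ (j : ℝ) := Nat.cast_nonneg j
    linarith
  have := telescope hz
  unfold Kt
  rw [div_eq_mul_one_div, this]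

lemma Kt_pos (y : ℕ) (hy : 0 < y) (j : ℕ) : 0 < Kt y j := by
  have hy1 : (0 : ℝ) < (y : ℝ) := by exact_mod_cast hy
  have hj : (0 : ℝ) ≤ (j : ℝ) := Nat.cast_nonneg j
  have h1 : (0 : ℝ) < f y := f_pos hy1
  have h2 : (0 : ℝ) < f ((y : ℝ) + 1) := f_pos (by linarith)
  have h3 : (0 : ℝ) < f ((y : ℝ) + j) := f_pos (by linarith)
  have h4 : (0 : ℝ) < f ((y : ℝ) + j + 1) := f_pos (by linarith)
  have : f ((y : ℝ) + 1) = f (((y : ℝ)) + 1) := rfl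
  unfold Kt
  have hc : f ((y : ℕ) : ℝ) * f (((y : ℕ) : ℝ) + 1) > 0 := mul_pos h1 h2
  positivity

lemma Kt_zero (y : ℕ) (hy : 0 < y) : Kt y 0 = 1 := by
  have hy1 : (0 : ℝ) < (y : ℝ) := by exact_mod_cast hy
  have h1 : (0 : ℝ) < f y := f_pos hy1
  have h2 : (0 : ℝ) < f ((y : ℝ) + 1) := f_pos (by linarith)
  unfold Kt
  rw [Nat.cast_zero, add_zero]
  field_simp

/-- Partial sums of `Kt`. -/
noncomputable def w (y m : ℕ) : ℝ := ∑ i ∈ Finset.range m, Kt y i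

lemma w_eq (y : ℕ) (hy : 0 < y) (m : ℕ) :
    w y m = f y * f (y + 1) * (A y - A ((y : ℝ) + m)) := by
  unfold w
  have : ∀ i ∈ Finset.range m, Kt y i =
      (fun i : ℕ => f y * f (y + 1) * A ((y : ℝ) + i)) i -
      (fun i : ℕ => f y * f (y + 1) * A ((y : ℝ) + i)) (i + 1) := by
    intro i _
    rw [Kt_eq y hy i]
    push_cast
    ring
  rw [Finset.sum_congr rfl this, Finset.sum_range_sub']
  simp only [Nat.cast_zero, add_zero]
  ring

lemma CA_eq (y : ℕ) (hy : 0 < y) : f y * f (y + 1) * A y = Sv y := by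
  have hy1 : (1 : ℝ) ≤ (y : ℝ) := by exact_mod_cast hy
  unfold f A Sv
  have h0 : (y : ℝ) ≠ 0 := by nlinarith
  have h1 : (y : ℝ) + 1 ≠ 0 := by nlinarith
  have h2 : (y : ℝ) + 2 ≠ 0 := by nlinarith
  have h3 : (y : ℝ) + 3 ≠ 0 := by nlinarith
  have h5 : 2 * (y : ℝ) + 3 ≠ 0 := by nlinarith
  field_simp
  ring

lemma Sv_pos (y : ℕ) (hy : 0 < y) : 0 < Sv y := by
  have hy1 : (1 : ℝ) ≤ (y : ℝ) := by exact_mod_cast hy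
  unfold Sv
  positivity

lemma A_tendsto (y : ℕ) (hy : 0 < y) :
    Tendsto (fun n : ℕ => A ((y : ℝ) + n)) atTop (𝓝 0) := by
  have hy1 : (1 : ℝ) ≤ (y : ℝ) := by exact_mod_cast hy
  refine squeeze_zero_norm' ?_ tendsto_one_div_atTop_nhds_zero_nat
  filter_upwards [eventually_ge_atTop 1] with n hn
  have hn1 : (1 : ℝ) ≤ (n : ℝ) := by exact_mod_cast hn
  have hz : (1 : ℝ) ≤ (y : ℝ) + n := by linarith
  have hApos : 0 < A ((y : ℝ) + n) := A_pos (by linarith)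
  rw [Real.norm_eq_abs, abs_of_pos hApos]
  unfold A
  rw [div_le_div_iff₀ (by positivity) (by positivity)]
  set z : ℝ := (y : ℝ) + n with hzdef
  have hzn : (n : ℝ) ≤ z := by rw [hzdef]; linarith
  have h12 : (1 : ℝ) ≤ (z + 1) * (z + 2) := by nlinarith
  have h123 : (1 : ℝ) ≤ (z + 1) * (z + 2) * (z + 3) := by nlinarith
  have hQ : (1 : ℝ) ≤ (z + 1) * (z + 2) * (z + 3) * (2 * z + 3) := by nlinarith
  have h10 : (0 : ℝ) ≤ 10 * z := by linarith
  have := mul_le_mul_of_nonneg_left hQ h10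
  nlinarith [this]

lemma w_tendsto (y : ℕ) (hy : 0 < y) :
    Tendsto (fun m : ℕ => w y m) atTop (𝓝 (Sv y)) := by
  have h1 : Tendsto (fun m : ℕ => f y * f (y + 1) * (A y - A ((y : ℝ) + m))) atTop
      (𝓝 (f y * f (y + 1) * (A y - 0))) :=
    (tendsto_const_nhds.sub (A_tendsto y hy)).const_mul _
  rw [sub_zero, CA_eq y hy] at h1
  exact h1.congr fun m => (w_eq y hy m).symm

lemma w_le_Sv (y : ℕ) (hy : 0 < y) (m : ℕ) : w y m ≤ Sv y := by
  have hy1 : (1 : ℝ) ≤ (y : ℝ) := by exact_mod_cast hy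
  have hApos : 0 < A ((y : ℝ) + m) := A_pos (by positivity)
  have h1 : 0 < f (y : ℝ) := f_pos (by linarith)
  have h2 : 0 < f ((y : ℝ) + 1) := f_pos (by linarith)
  rw [w_eq y hy m, ← CA_eq y hy]
  nlinarith [mul_pos (mul_pos h1 h2) hApos]

lemma w_succ (y m : ℕ) : w y (m + 1) = w y m + Kt y m := by
  unfold w; rw [Finset.sum_range_succ]

lemma hasSum_Kt (y : ℕ) (hy : 0 < y) : HasSum (fun j => Kt y j) (Sv y) := by
  rw [hasSum_iff_tendsto_nat_of_nonneg (fun i => (Kt_pos y hy i).le)]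
  exact w_tendsto y hy

/-! ### Properties of p, q, r -/

lemma pqr_sum (x : ℕ) : p x + r x + q x = 1 := by
  have h0 : (0 : ℝ) ≤ (x : ℝ) := Nat.cast_nonneg x
  unfold p q r
  have h1 : (x : ℝ) + 1 ≠ 0 := by nlinarith
  have h2 : (x : ℝ) + 2 ≠ 0 := by nlinarith
  have h3 : 2 * (x : ℝ) + 3 ≠ 0 := by nlinarith
  field_simp
  ring

lemma p_pos (x : ℕ) : 0 < p x := by
  have h0 : (0 : ℝ) ≤ (x : ℝ) := Nat.cast_nonneg x
  unfold p; positivity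

lemma r_nonneg (x : ℕ) : 0 ≤ r x := by
  have h0 : (0 : ℝ) ≤ (x : ℝ) := Nat.cast_nonneg x
  unfold r; positivity

lemma q_nonneg (x : ℕ) (hx : 1 ≤ x) : 0 ≤ q x := by
  have h0 : (1 : ℝ) ≤ (x : ℝ) := by exact_mod_cast hx
  unfold q
  have h1 : (0 : ℝ) ≤ (x : ℝ) - 1 := by linarith
  positivity

/-- The key ratio identity `p(x) K_{j+1} = q(x) K_j` at `x = y + j + 1`. -/
lemma ratio (y : ℕ) (hy : 0 < y) (j : ℕ) :
    p (y + j + 1) * Kt y (j + 1) = q (y + j + 1) * Kt y j := by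
  have hy1 : (1 : ℝ) ≤ (y : ℝ) := by exact_mod_cast hy
  have hj : (0 : ℝ) ≤ (j : ℝ) := Nat.cast_nonneg j
  have hcast1 : ((((j : ℕ) + 1 : ℕ)) : ℝ) = (j : ℝ) + 1 := by push_cast; ring
  have hcast2 : (((y + j + 1 : ℕ)) : ℝ) = (y : ℝ) + (j : ℝ) + 1 := by push_cast; ring
  unfold Kt p q
  rw [hcast1, hcast2]
  rw [show (y : ℝ) + ((j : ℝ) + 1) = (y : ℝ) + (j : ℝ) + 1 from by ring]
  rw [show (y : ℝ) + (j : ℝ) + 1 + 1 = (y : ℝ) + (j : ℝ) + 2 from by ring]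
  set u : ℝ := (y : ℝ) + (j : ℝ) with hu
  have hu1 : (1 : ℝ) ≤ u := by rw [hu]; linarith
  have hfy : 0 < f (y : ℝ) := f_pos (by linarith)
  have hfy1 : 0 < f ((y : ℝ) + 1) := f_pos (by linarith)
  have hfu : 0 < f u := f_pos (by linarith)
  have hfu1 : 0 < f (u + 1) := f_pos (by linarith)
  have hfu2 : 0 < f (u + 2) := f_pos (by linarith)
  have hC : f (y : ℝ) * f ((y : ℝ) + 1) ≠ 0 := ne_of_gt (mul_pos hfy hfy1)
  rw [div_mul_div_comm, div_mul_div_comm, div_eq_div_iff (by positivity) (by positivity)]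
  unfold f
  ring

/-- Harmonicity of the partial sums: `p w(j+2) + r w(j+1) + q w j = w(j+1)` at `x = y+j+1`. -/
lemma w_harmonic (y : ℕ) (hy : 0 < y) (j : ℕ) :
    p (y + j + 1) * w y (j + 2) + r (y + j + 1) * w y (j + 1) + q (y + j + 1) * w y j
      = w y (j + 1) := by
  have h1 := ratio y hy j
  have h2 := pqr_sum (y + j + 1)
  rw [w_succ y (j + 1), w_succ y j]
  linear_combination h1 + (w y j + Kt y j) * h2


/-! ### Properties of the hitting probabilities `H` -/

lemma H_self (y n : ℕ) : H y n y = 1 := by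
  cases n <;> simp [H]

lemma H_zero_ne (y x : ℕ) (hx : x ≠ y) : H y 0 x = 0 := by
  simp [H, hx]

lemma H_succ_ne (y n x : ℕ) (hx : x ≠ y) :
    H y (n + 1) x = p x * H y n (x + 1) + r x * H y n x + q x * H y n (x - 1) := by
  simp [H, hx]

lemma H_mem (y : ℕ) (hy : 0 < y) :
    ∀ n j : ℕ, 0 ≤ H y n (y + j) ∧ H y n (y + j) ≤ 1 := by
  intro n
  induction n with
  | zero =>
    intro j
    by_cases h : y + j = y <;> simp [H, h] <;> split_ifs <;> norm_num
  | succ n ih =>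
    intro j
    cases j with
    | zero =>
      have h1 : H y (n + 1) (y + 0) = 1 := H_self y (n + 1)
      rw [h1]
      norm_num
    | succ j =>
      have hne : y + (j + 1) ≠ y := by omega
      rw [H_succ_ne y n _ hne]
      rw [show y + (j + 1) + 1 = y + (j + 2) from by omega,
        show y + (j + 1) - 1 = y + j from by omega]
      have hq := q_nonneg (y + (j + 1)) (by omega)
      have hp := (p_pos (y + (j + 1))).le
      have hr := r_nonneg (y + (j + 1))
      obtain ⟨a0, a1⟩ := ih (j + 2)
      obtain ⟨b0, b1⟩ := ih (j + 1)
      obtain ⟨c0, c1⟩ := ih j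
      have hs := pqr_sum (y + (j + 1))
      constructor
      · exact add_nonneg (add_nonneg (mul_nonneg hp a0) (mul_nonneg hr b0))
          (mul_nonneg hq c0)
      · have m1 := mul_le_mul_of_nonneg_left a1 hp
        have m2 := mul_le_mul_of_nonneg_left b1 hr
        have m3 := mul_le_mul_of_nonneg_left c1 hq
        nlinarith [m1, m2, m3]

lemma H_mono (y : ℕ) (hy : 0 < y) :
    ∀ n j : ℕ, H y n (y + j) ≤ H y (n + 1) (y + j) := by
  intro n
  induction n with
  | zero =>
    intro j
    cases j with
    | zero =>
      have h1 : H y 0 (y + 0) = 1 := H_self y 0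
      have h2 : H y 1 (y + 0) = 1 := H_self y 1
      rw [h1, h2]
    | succ j =>
      rw [H_zero_ne y _ (by omega : y + (j + 1) ≠ y)]
      exact (H_mem y hy 1 (j + 1)).1
  | succ n ih =>
    intro j
    cases j with
    | zero =>
      have h1 : H y (n + 1) (y + 0) = 1 := H_self y (n + 1)
      have h2 : H y (n + 1 + 1) (y + 0) = 1 := H_self y (n + 1 + 1)
      rw [h1, h2]
    | succ j =>
      have hne : y + (j + 1) ≠ y := by omega
      rw [H_succ_ne y n _ hne, H_succ_ne y (n + 1) _ hne]
      rw [show y + (j + 1) + 1 = y + (j + 2) from by omega,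
        show y + (j + 1) - 1 = y + j from by omega]
      have hq := q_nonneg (y + (j + 1)) (by omega)
      have hp := (p_pos (y + (j + 1))).le
      have hr := r_nonneg (y + (j + 1))
      have m1 := mul_le_mul_of_nonneg_left (ih (j + 2)) hp
      have m2 := mul_le_mul_of_nonneg_left (ih (j + 1)) hr
      have m3 := mul_le_mul_of_nonneg_left (ih j) hq
      linarith

/-- The limiting hitting probability. -/
noncomputable def L (y x : ℕ) : ℝ := ⨆ n, H y n x

lemma L_bdd (y : ℕ) (hy : 0 < y) (j : ℕ) :
    BddAbove (Set.range fun n => H y n (y + j)) := by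
  refine ⟨1, ?_⟩
  rintro v ⟨n, rfl⟩
  exact (H_mem y hy n j).2

lemma H_tendsto (y : ℕ) (hy : 0 < y) (j : ℕ) :
    Tendsto (fun n => H y n (y + j)) atTop (𝓝 (L y (y + j))) :=
  tendsto_atTop_ciSup (monotone_nat_of_le_succ fun n => H_mono y hy n j)
    (L_bdd y hy j)

lemma L_nonneg (y : ℕ) (hy : 0 < y) (j : ℕ) : 0 ≤ L y (y + j) :=
  le_trans (H_mem y hy 0 j).1 (le_ciSup (L_bdd y hy j) 0)

lemma L_le_one (y : ℕ) (hy : 0 < y) (j : ℕ) : L y (y + j) ≤ 1 :=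
  ciSup_le fun n => (H_mem y hy n j).2

lemma L_self (y : ℕ) : L y y = 1 := by
  unfold L
  simp [H_self]

lemma L_harm (y : ℕ) (hy : 0 < y) (j : ℕ) :
    L y (y + j + 1) = p (y + j + 1) * L y (y + j + 2) + r (y + j + 1) * L y (y + j + 1)
      + q (y + j + 1) * L y (y + j) := by
  have hrec : ∀ n, H y (n + 1) (y + j + 1) =
      p (y + j + 1) * H y n (y + j + 2) + r (y + j + 1) * H y n (y + j + 1)
        + q (y + j + 1) * H y n (y + j) := by
    intro n
    rw [H_succ_ne y n _ (by omega : y + j + 1 ≠ y), Nat.add_sub_cancel]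
  have t0 : Tendsto (fun n => H y n (y + j + 1)) atTop (𝓝 (L y (y + j + 1))) :=
    H_tendsto y hy (j + 1)
  have t1 : Tendsto (fun n => H y (n + 1) (y + j + 1)) atTop (𝓝 (L y (y + j + 1))) :=
    t0.comp (tendsto_add_atTop_nat 1)
  have t2 : Tendsto (fun n => H y n (y + j + 2)) atTop (𝓝 (L y (y + j + 2))) :=
    H_tendsto y hy (j + 2)
  have t3 : Tendsto (fun n => H y n (y + j)) atTop (𝓝 (L y (y + j))) :=
    H_tendsto y hy j
  have t4 : Tendsto (fun n => p (y + j + 1) * H y n (y + j + 2)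
      + r (y + j + 1) * H y n (y + j + 1) + q (y + j + 1) * H y n (y + j)) atTop
      (𝓝 (p (y + j + 1) * L y (y + j + 2) + r (y + j + 1) * L y (y + j + 1)
        + q (y + j + 1) * L y (y + j))) :=
    ((t2.const_mul _).add (t0.const_mul _)).add (t3.const_mul _)
  exact tendsto_nhds_unique (t1.congr hrec) t4

lemma L_diff (y : ℕ) (hy : 0 < y) :
    ∀ j, L y (y + j) - L y (y + j + 1) = (1 - L y (y + 1)) * Kt y j := by
  intro j
  induction j with
  | zero =>
    rw [Kt_zero y hy, Nat.add_zero, L_self]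
    ring
  | succ j ih =>
    have h1 := L_harm y hy j
    have hs := pqr_sum (y + j + 1)
    have key : p (y + j + 1) * (L y (y + j + 1) - L y (y + j + 2)) =
        q (y + j + 1) * (L y (y + j) - L y (y + j + 1)) := by
      linear_combination (L y (y + j + 1)) * hs + h1
    rw [ih] at key
    have hratio : p (y + j + 1) * Kt y (j + 1) = q (y + j + 1) * Kt y j :=
      ratio y hy j
    have key2 : p (y + j + 1) * (L y (y + j + 1) - L y (y + j + 2)) =
        p (y + j + 1) * ((1 - L y (y + 1)) * Kt y (j + 1)) := by
      linear_combination key - (1 - L y (y + 1)) * hratio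
    have hp : p (y + j + 1) ≠ 0 := ne_of_gt (p_pos _)
    have := mul_left_cancel₀ hp key2
    rw [show y + (j + 1) = y + j + 1 from rfl, show y + j + 1 + 1 = y + j + 2 from rfl]
    exact this

lemma L_sum (y : ℕ) (hy : 0 < y) :
    ∀ m, 1 - L y (y + m) = (1 - L y (y + 1)) * w y m := by
  intro m
  induction m with
  | zero =>
    rw [Nat.add_zero, L_self]
    simp [w]
  | succ m ih =>
    have hd : L y (y + m) - L y (y + m + 1) = (1 - L y (y + 1)) * Kt y m :=
      L_diff y hy m
    rw [show y + (m + 1) = y + m + 1 from rfl, w_succ]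
    linear_combination ih + hd

lemma H_le (y : ℕ) (hy : 0 < y) :
    ∀ n j : ℕ, H y n (y + j) ≤ 1 - w y j / Sv y := by
  have hS := Sv_pos y hy
  intro n
  induction n with
  | zero =>
    intro j
    cases j with
    | zero =>
      have h1 : H y 0 (y + 0) = 1 := H_self y 0
      rw [h1]
      simp [w]
    | succ j =>
      rw [H_zero_ne y _ (by omega : y + (j + 1) ≠ y)]
      have h : w y (j + 1) / Sv y ≤ 1 := (div_le_one hS).mpr (w_le_Sv y hy (j + 1))
      linarith
  | succ n ih =>
    intro j
    cases j with
    | zero =>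
      have h1 : H y (n + 1) (y + 0) = 1 := H_self y (n + 1)
      rw [h1]
      simp [w]
    | succ j =>
      have hne : y + (j + 1) ≠ y := by omega
      rw [H_succ_ne y n _ hne]
      rw [show y + (j + 1) + 1 = y + (j + 2) from by omega,
        show y + (j + 1) - 1 = y + j from by omega]
      have hq := q_nonneg (y + (j + 1)) (by omega)
      have hp := p_pos (y + (j + 1))
      have hr := r_nonneg (y + (j + 1))
      have m1 := mul_le_mul_of_nonneg_left (ih (j + 2)) hp.le
      have m2 := mul_le_mul_of_nonneg_left (ih (j + 1)) hr
      have m3 := mul_le_mul_of_nonneg_left (ih j) hq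
      have hw : p (y + (j + 1)) * w y (j + 2) + r (y + (j + 1)) * w y (j + 1)
          + q (y + (j + 1)) * w y j = w y (j + 1) := w_harmonic y hy j
      have hs : p (y + (j + 1)) + r (y + (j + 1)) + q (y + (j + 1)) = 1 :=
        pqr_sum (y + j + 1)
      have hS' : Sv y ≠ 0 := ne_of_gt hS
      have hEq : p (y + (j + 1)) * (1 - w y (j + 2) / Sv y)
          + r (y + (j + 1)) * (1 - w y (j + 1) / Sv y)
          + q (y + (j + 1)) * (1 - w y j / Sv y) = 1 - w y (j + 1) / Sv y := by
        linear_combination hs - (1 / Sv y) * hw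
      linarith [m1, m2, m3, hEq]

end Stmt4Aux

open Stmt4Aux in

/-- For a positive integer `y`, `∑_{j≥0} K_{y+1,j} = (y+4)(2y+5)/(10(y+2))`, and
consequently the chain `X̃` started at `y+1` never hits `y` with probability
`10(y+2)/((y+4)(2y+5))`. -/
theorem stmt_4 (y : ℕ) (hy : 0 < y) :
    (∑' j : ℕ, f y * f (y + 1) / (f ((y : ℝ) + j) * f ((y : ℝ) + j + 1))
        = ((y : ℝ) + 4) * (2 * y + 5) / (10 * ((y : ℝ) + 2))) ∧
    Tendsto (fun n => 1 - H y n (y + 1)) atTop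
      (𝓝 (10 * ((y : ℝ) + 2) / (((y : ℝ) + 4) * (2 * y + 5)))) := by
  have hS : 0 < Sv y := Sv_pos y hy
  have hval : (1 : ℝ) / Sv y = 10 * ((y : ℝ) + 2) / (((y : ℝ) + 4) * (2 * y + 5)) := by
    unfold Sv
    rw [one_div_div]
  constructor
  · have h := (hasSum_Kt y hy).tsum_eq
    unfold Kt Sv at h
    exact h
  · set c : ℝ := 1 - L y (y + 1) with hc
    have hub : c * Sv y ≤ 1 := by
      refine le_of_tendsto ((w_tendsto y hy).const_mul c) ?_
      filter_upwards with m
      rw [← L_sum y hy m]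
      have := L_nonneg y hy m
      linarith
    have hlb : 1 / Sv y ≤ c := by
      have h2 : L y (y + 1) ≤ 1 - w y 1 / Sv y :=
        ciSup_le fun n => H_le y hy n 1
      have hw1 : w y 1 = 1 := by
        unfold w
        rw [Finset.sum_range_one, Kt_zero y hy]
      rw [hw1] at h2
      rw [hc]
      linarith
    have hub' : c ≤ 1 / Sv y := by
      rw [le_div_iff₀ hS]
      exact hub
    have hceq : c = 1 / Sv y := le_antisymm hub' hlb
    have ht : Tendsto (fun n => 1 - H y n (y + 1)) atTop (𝓝 (1 - L y (y + 1))) :=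
      tendsto_const_nhds.sub (H_tendsto y hy 1)
    rw [← hc, hceq, hval] at ht
    exact ht
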